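/- There exist constants β > 0 and C > 0 such that for all n ≥ 2, all noise rates p ≤ β/n², every K ∈ ℕ with K ≥ 1, and every initial population P_0 with {0, n} ⊆ f(P_0), the K-extreme-values-keeping SEMO with reevaluation on OneMinMax under one-bit noise with rate p satisfies Pr[T̂_total^K ≥ K] ≤ C · n² / K. -/

import Mathlib

open scoped ENNReal NNReal
open scoped Classical
open MeasureTheory

noncomputable section

/-- The search space `{0,1}^n`. -/
abbrev Pt (n : ℕ) := Fin n → Bool

/-- The OneMax value: number of one-bits. -/
def fval {n : ℕ} (x : Pt n) : ℕ := (Finset.univ.filter fun i => x i = true).card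

/-- The OneMinMax objective `g(x) = (f(x), n - f(x))`. -/
def gval {n : ℕ} (x : Pt n) : ℕ × ℕ := (fval x, n - fval x)

/-- Weak Pareto dominance on `ℕ × ℕ`. -/
def domLe (a b : ℕ × ℕ) : Prop := a.1 ≤ b.1 ∧ a.2 ≤ b.2

/-- Strict Pareto dominance on `ℕ × ℕ`. -/
def domLt (a b : ℕ × ℕ) : Prop := domLe a b ∧ a ≠ b

/-- Flip bit `i` of `x`. -/
def flipBit {n : ℕ} (x : Pt n) (i : Fin n) : Pt n := Function.update x i (!x i)

/-- One-bit mutation: flip one uniformly chosen bit. -/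
def mutate {n : ℕ} (x : Pt n) : PMF (Pt n) :=
  if h : (Finset.univ : Finset (Fin n)).Nonempty then
    (PMF.uniformOfFinset Finset.univ h).map (flipBit x)
  else PMF.pure x

/-- One-bit noise with rate `p`: with probability `p` a uniformly random bit is flipped. -/
def noisyPoint {n : ℕ} (p : ℝ≥0) (hp : p ≤ 1) (x : Pt n) : PMF (Pt n) :=
  (PMF.bernoulli p (by exact_mod_cast hp)).bind fun b =>
    if b then mutate x else PMF.pure x

/-- The noisy objective value `g̃(x) = g(x̃)`. -/
def noisyG {n : ℕ} (p : ℝ≥0) (hp : p ≤ 1) (x : Pt n) : PMF (ℕ × ℕ) :=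
  (noisyPoint p hp x).map gval

/-- Probability of an event under a `PMF`. -/
def prEvent {α : Type*} (μ : PMF α) (E : Set α) : ℝ≥0∞ := μ.toOuterMeasure E

/-- Distribution of the state of a Markov chain at time `t`. -/
def iterDist {S : Type*} (init : PMF S) (step : S → PMF S) : ℕ → PMF S
  | 0 => init
  | t + 1 => (iterDist init step t).bind step

/-- `notHitBy step good t s` is the probability that starting from `s`, none of the
states at times `0, 1, …, t` satisfies `good`; i.e. `Pr[T > t]` for the hitting time `T`. -/
def notHitBy {S : Type*} (step : S → PMF S) (good : S → Prop) : ℕ → S → ℝ≥0∞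
  | 0 => fun s => if good s then 0 else 1
  | t + 1 => fun s => if good s then 0 else ∑' s', step s s' * notHitBy step good t s'

/-- Expected hitting time of `good`, via `E[T] = ∑_{t ≥ 0} Pr[T > t]`. -/
def expHit {S : Type*} (init : PMF S) (step : S → PMF S) (good : S → Prop) : ℝ≥0∞ :=
  ∑' t : ℕ, ∑' s, init s * notHitBy step good t s

/-- Law of the trajectory `(s_0, …, s_t)` of the Markov chain. -/
def trajPMF {S : Type*} (init : PMF S) (step : S → PMF S) : (t : ℕ) → PMF (Fin (t + 1) → S)
  | 0 => init.map fun s _ => s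
  | t + 1 => (trajPMF init step t).bind fun tr =>
      (step (tr (Fin.last t))).map fun s' => Fin.snoc tr s'

/-- Hitting time of `good` along a trajectory, valued in `ℕ∞`. -/
def hitTime {S : Type*} (good : S → Prop) (traj : ℕ → S) : ℕ∞ :=
  sInf ((fun t : ℕ => (t : ℕ∞)) '' {t | good (traj t)})

/-! ### SEMO without reevaluation -/

/-- State: population members together with their stored noisy objective values. -/
abbrev StateNR (n : ℕ) := Multiset (Pt n × (ℕ × ℕ))

/-- One iteration of the SEMO without reevaluation. -/
def stepNR {n : ℕ} (p : ℝ≥0) (hp : p ≤ 1) (P : StateNR n) : PMF (StateNR n) :=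
  if hP : P = 0 then PMF.pure P else
    (PMF.ofMultiset P hP).bind fun xv =>
      (mutate xv.1).bind fun x' =>
        (noisyG p hp x').map fun w =>
          if ∃ y ∈ P, domLt w y.2 then P
          else (x', w) ::ₘ P.filter fun y => ¬ domLe y.2 w

/-- Initialization: a single uniformly random point with an independent noisy evaluation. -/
def initNR (n : ℕ) (p : ℝ≥0) (hp : p ≤ 1) : PMF (StateNR n) :=
  (PMF.uniformOfFintype (Pt n)).bind fun x =>
    (noisyG p hp x).map fun w => ({(x, w)} : StateNR n)

/-- The set of stored noisy first-coordinate values `V(P)`. -/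
def VvalsNR {n : ℕ} (P : StateNR n) : Set ℕ := {v | ∃ y ∈ P, (y : Pt n × ℕ × ℕ).2.1 = v}

/-- Both extreme values `0` and `n` appear among the stored noisy first coordinates. -/
def goodExNR {n : ℕ} (P : StateNR n) : Prop := 0 ∈ VvalsNR P ∧ (n : ℕ) ∈ VvalsNR P

/-- The true OneMax values of the population cover the whole Pareto front `[0..n]`. -/
def fCoveredNR {n : ℕ} (P : StateNR n) : Prop :=
  {k : ℕ | ∃ y ∈ P, fval (y : Pt n × ℕ × ℕ).1 = k} = Set.Icc 0 n

/-! ### SEMO with reevaluation -/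

/-- State: a finite multiset of points. -/
abbrev StateR (n : ℕ) := Multiset (Pt n)

/-- The elimination procedure: process the elements of the list in order, drawing a fresh
noisy value for each, discarding an element if strictly dominated by a kept one, and
otherwise keeping it while removing the kept elements it dominates. -/
def elimAux {n : ℕ} (p : ℝ≥0) (hp : p ≤ 1) :
    List (Pt n) → Multiset (Pt n × (ℕ × ℕ)) → PMF (Multiset (Pt n × (ℕ × ℕ)))
  | [], kept => PMF.pure kept
  | x :: rest, kept =>
      (noisyG p hp x).bind fun w =>
        if ∃ y ∈ kept, domLt w (y : Pt n × ℕ × ℕ).2 then elimAux p hp rest kept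
        else elimAux p hp rest ((x, w) ::ₘ kept.filter fun y => ¬ domLe y.2 w)

/-- One iteration of the SEMO with reevaluation: uniform parent selection, one-bit
mutation, then elimination of `P ∪ {x'}` processed in a uniformly random order. -/
def stepR {n : ℕ} (p : ℝ≥0) (hp : p ≤ 1) (P : StateR n) : PMF (StateR n) :=
  if hP : P = 0 then PMF.pure P else
    (PMF.ofMultiset P hP).bind fun x =>
      (mutate x).bind fun x' =>
        (PMF.ofMultiset (↑((x' ::ₘ P).toList.permutations) : Multiset (List (Pt n)))
          (by
            simp only [ne_eq, Multiset.coe_eq_zero]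
            exact List.ne_nil_of_mem
              (List.mem_permutations.mpr (List.Perm.refl _)))).bind fun l =>
          (elimAux p hp l 0).map fun kept => kept.map Prod.fst

/-- Initialization: a single uniformly random point. -/
def initR (n : ℕ) : PMF (StateR n) :=
  (PMF.uniformOfFintype (Pt n)).map fun x => ({x} : Multiset (Pt n))

/-- The population contains members of true OneMax value `0` and of value `n`. -/
def goodExR {n : ℕ} (P : StateR n) : Prop :=
  (∃ x ∈ P, fval (x : Pt n) = 0) ∧ (∃ x ∈ P, fval (x : Pt n) = n)

/-- The true OneMax values of the population cover the whole Pareto front `[0..n]`. -/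
def fCoveredR {n : ℕ} (P : StateR n) : Prop :=
  {k : ℕ | ∃ x ∈ P, fval (x : Pt n) = k} = Set.Icc 0 n

/-- Number of distinct true OneMax values in the population. -/
def Lval {n : ℕ} (P : StateR n) : ℕ := (P.map fval).toFinset.card

/-- Append the all-zeros (resp. all-ones) string if no member has value 0 (resp. `n`). -/
def fixExtremes {n : ℕ} (P : StateR n) : StateR n :=
  let P1 := if ∃ x ∈ P, fval (x : Pt n) = 0 then P else ((fun _ => false) : Pt n) ::ₘ P
  if ∃ x ∈ P1, fval (x : Pt n) = n then P1 else ((fun _ => true) : Pt n) ::ₘ P1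

/-- One iteration of the `K`-extreme-values-keeping SEMO with reevaluation, with the
iteration counter as part of the state. -/
def stepK {n : ℕ} (p : ℝ≥0) (hp : p ≤ 1) (K : ℕ) (st : ℕ × StateR n) :
    PMF (ℕ × StateR n) :=
  (stepR p hp st.2).map fun Q => (st.1 + 1, if st.1 < K then fixExtremes Q else Q)


/-! ### Auxiliary infrastructure -/

section Pexp

variable {α β : Type*}

/-- Expectation of a nonnegative function under a `PMF`. -/
def pexp (μ : PMF α) (f : α → ℝ≥0∞) : ℝ≥0∞ := ∑' a, μ a * f a

lemma pexp_pure (a : α) (f : α → ℝ≥0∞) : pexp (PMF.pure a) f = f a := by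
  rw [pexp, tsum_eq_single a]
  · simp [PMF.pure_apply]
  · intro b hb; simp [PMF.pure_apply, hb]

lemma pexp_bind (μ : PMF α) (g : α → PMF β) (f : β → ℝ≥0∞) :
    pexp (μ.bind g) f = pexp μ fun a => pexp (g a) f := by
  simp only [pexp, PMF.bind_apply]
  calc ∑' b, (∑' a, μ a * (g a) b) * f b
      = ∑' b, ∑' a, μ a * (g a) b * f b :=
        tsum_congr fun b => by rw [← ENNReal.tsum_mul_right]
    _ = ∑' a, ∑' b, μ a * (g a) b * f b := ENNReal.tsum_comm
    _ = ∑' a, μ a * ∑' b, (g a) b * f b :=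
        tsum_congr fun a => by
          rw [← ENNReal.tsum_mul_left]
          exact tsum_congr fun b => by ring

lemma pexp_map (μ : PMF α) (h : α → β) (f : β → ℝ≥0∞) :
    pexp (μ.map h) f = pexp μ fun a => f (h a) := by
  rw [PMF.map, pexp_bind]
  simp only [Function.comp, pexp_pure]

lemma pexp_mono_support {μ : PMF α} {f g : α → ℝ≥0∞}
    (h : ∀ a ∈ μ.support, f a ≤ g a) : pexp μ f ≤ pexp μ g := by
  refine ENNReal.tsum_le_tsum fun a => ?_
  by_cases ha : μ a = 0
  · simp [ha]
  · exact mul_le_mul_right (h a ha) _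

lemma pexp_add (μ : PMF α) (f g : α → ℝ≥0∞) :
    pexp μ (fun a => f a + g a) = pexp μ f + pexp μ g := by
  simp [pexp, mul_add, ENNReal.tsum_add]

lemma pexp_const (μ : PMF α) (c : ℝ≥0∞) : pexp μ (fun _ => c) = c := by
  simp only [pexp]
  rw [ENNReal.tsum_mul_right, PMF.tsum_coe, one_mul]

lemma pexp_le_const {μ : PMF α} {f : α → ℝ≥0∞} {c : ℝ≥0∞}
    (h : ∀ a ∈ μ.support, f a ≤ c) : pexp μ f ≤ c := by
  calc pexp μ f ≤ pexp μ (fun _ => c) := pexp_mono_support h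
    _ = c := pexp_const μ c

lemma const_le_pexp {μ : PMF α} {f : α → ℝ≥0∞} {c : ℝ≥0∞}
    (h : ∀ a ∈ μ.support, c ≤ f a) : c ≤ pexp μ f := by
  calc c = pexp μ (fun _ => c) := (pexp_const μ c).symm
    _ ≤ pexp μ f := pexp_mono_support h

lemma single_le_pexp (μ : PMF α) (f : α → ℝ≥0∞) (a : α) :
    μ a * f a ≤ pexp μ f := ENNReal.le_tsum a

lemma pexp_indicator [DecidableEq α] (μ : PMF α) (a₀ : α) (c : ℝ≥0∞) :
    pexp μ (fun a => if a = a₀ then c else 0) = μ a₀ * c := by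
  rw [pexp, tsum_eq_single a₀]
  · simp
  · intro b hb; simp [hb]

lemma pexp_le_one {μ : PMF α} {f : α → ℝ≥0∞} (h : ∀ a, f a ≤ 1) : pexp μ f ≤ 1 :=
  pexp_le_const fun a _ => h a

end Pexp

section Generic

variable {S : Type*}

lemma notHitBy_of_good (step : S → PMF S) (good : S → Prop) (t : ℕ) (s : S)
    (hg : good s) : notHitBy step good t s = 0 := by
  cases t <;> simp [notHitBy, hg]

lemma notHitBy_le_one (step : S → PMF S) (good : S → Prop) :
    ∀ (t : ℕ) (s : S), notHitBy step good t s ≤ 1 := by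
  intro t
  induction t with
  | zero => intro s; by_cases hg : good s <;> simp [notHitBy, hg]
  | succ t ih =>
    intro s
    by_cases hg : good s
    · simp [notHitBy, hg]
    · simp only [notHitBy, hg, if_false]
      calc ∑' s', (step s) s' * notHitBy step good t s'
          ≤ ∑' s', (step s) s' * 1 :=
            ENNReal.tsum_le_tsum fun s' => mul_le_mul_right (ih s') _
        _ = 1 := by simp [(step s).tsum_coe]

lemma notHitBy_succ_le (step : S → PMF S) (good : S → Prop) :
    ∀ (t : ℕ) (s : S), notHitBy step good (t + 1) s ≤ notHitBy step good t s := by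
  intro t
  induction t with
  | zero =>
    intro s
    by_cases hg : good s
    · simp [notHitBy, hg]
    · simp only [notHitBy, hg, if_false]
      calc ∑' s', (step s) s' * notHitBy step good 0 s'
          ≤ ∑' s', (step s) s' * 1 :=
            ENNReal.tsum_le_tsum fun s' => mul_le_mul_right (notHitBy_le_one _ _ _ _) _
        _ = 1 := by simp [(step s).tsum_coe]
  | succ t ih =>
    intro s
    by_cases hg : good s
    · simp [notHitBy, hg]
    · show notHitBy step good (t + 1 + 1) s ≤ notHitBy step good (t + 1) s
      simp only [notHitBy, hg, if_false]
      exact ENNReal.tsum_le_tsum fun s' => mul_le_mul_right (ih s') _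

lemma notHitBy_anti (step : S → PMF S) (good : S → Prop) (s : S) {k t : ℕ}
    (hkt : k ≤ t) : notHitBy step good t s ≤ notHitBy step good k s := by
  induction t with
  | zero => simp_all
  | succ t ih =>
    rcases Nat.lt_or_ge k (t + 1) with h | h
    · exact le_trans (notHitBy_succ_le step good t s) (ih (Nat.lt_succ_iff.mp h))
    · have : k = t + 1 := le_antisymm hkt h
      subst this; rfl

/-- Additive-drift bound on the partial sums of non-hitting probabilities. -/
lemma drift_sum (step : S → PMF S) (good : S → Prop)
    (Inv : ℕ → S → Prop) (φ : S → ℝ≥0∞) (δ : ℝ≥0∞)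
    (hbase : ∀ j s, Inv j s → ¬ good s → δ ≤ φ s)
    (hclose : ∀ j s, Inv (j + 1) s → ¬ good s → ∀ s' ∈ (step s).support, Inv j s')
    (hdrift : ∀ j s, Inv j s → ¬ good s → pexp (step s) φ + δ ≤ φ s) :
    ∀ t s, Inv t s →
      δ * (∑ k ∈ Finset.range (t + 1), notHitBy step good k s) ≤ φ s := by
  intro t
  induction t with
  | zero =>
    intro s hs
    by_cases hg : good s
    · simp [notHitBy, hg]
    · simpa [notHitBy, hg] using hbase 0 s hs hg
  | succ t ih =>
    intro s hs
    by_cases hg : good s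
    · have hz : ∀ k, notHitBy step good k s = 0 := fun k => notHitBy_of_good _ _ _ _ hg
      simp [hz]
    · rw [Finset.sum_range_succ']
      have h0 : notHitBy step good 0 s = 1 := by simp [notHitBy, hg]
      have hk : ∀ k, notHitBy step good (k + 1) s
          = ∑' s', (step s) s' * notHitBy step good k s' := by
        intro k; simp [notHitBy, hg]
      have hsum : (∑ k ∈ Finset.range (t + 1), notHitBy step good (k + 1) s)
          = ∑' s', (step s) s' *
              (∑ k ∈ Finset.range (t + 1), notHitBy step good k s') := by
        simp only [hk]
        rw [← Summable.tsum_finsetSum (fun k _ => ENNReal.summable)]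
        congr 1; ext s'
        rw [Finset.mul_sum]
      rw [hsum, h0, mul_add, mul_one]
      have key : δ * ∑' s', (step s) s' *
          (∑ k ∈ Finset.range (t + 1), notHitBy step good k s') ≤ pexp (step s) φ := by
        rw [← ENNReal.tsum_mul_left]
        refine ENNReal.tsum_le_tsum fun s' => ?_
        by_cases h0' : (step s) s' = 0
        · simp [h0']
        · have hI : Inv t s' := hclose t s hs hg s' h0'
          calc δ * ((step s) s' * ∑ k ∈ Finset.range (t + 1), notHitBy step good k s')
              = (step s) s' * (δ * ∑ k ∈ Finset.range (t + 1), notHitBy step good k s') := by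
                ring
            _ ≤ (step s) s' * φ s' := mul_le_mul_right (ih s' hI) _
      calc δ * ∑' s', (step s) s' * (∑ k ∈ Finset.range (t + 1), notHitBy step good k s') + δ
          ≤ pexp (step s) φ + δ := add_le_add_left key δ
        _ ≤ φ s := hdrift (t + 1) s hs hg

/-- Tail bound from additive drift: `δ * (t+1) * Pr[T > t] ≤ φ s`. -/
lemma drift_tail (step : S → PMF S) (good : S → Prop)
    (Inv : ℕ → S → Prop) (φ : S → ℝ≥0∞) (δ : ℝ≥0∞)
    (hbase : ∀ j s, Inv j s → ¬ good s → δ ≤ φ s)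
    (hclose : ∀ j s, Inv (j + 1) s → ¬ good s → ∀ s' ∈ (step s).support, Inv j s')
    (hdrift : ∀ j s, Inv j s → ¬ good s → pexp (step s) φ + δ ≤ φ s)
    (t : ℕ) (s : S) (hs : Inv t s) :
    δ * ((t + 1) * notHitBy step good t s) ≤ φ s := by
  have h1 : ((t + 1 : ℕ) : ℝ≥0∞) * notHitBy step good t s
      ≤ ∑ k ∈ Finset.range (t + 1), notHitBy step good k s := by
    calc ((t + 1 : ℕ) : ℝ≥0∞) * notHitBy step good t s
        = ∑ _k ∈ Finset.range (t + 1), notHitBy step good t s := by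
          simp [Finset.sum_const, nsmul_eq_mul]
      _ ≤ ∑ k ∈ Finset.range (t + 1), notHitBy step good k s :=
          Finset.sum_le_sum fun k hk =>
            notHitBy_anti step good s (Nat.lt_succ_iff.mp (Finset.mem_range.mp hk))
  calc δ * (((t : ℝ≥0∞) + 1) * notHitBy step good t s)
      = δ * (((t + 1 : ℕ) : ℝ≥0∞) * notHitBy step good t s) := by push_cast; ring_nf
    _ ≤ δ * ∑ k ∈ Finset.range (t + 1), notHitBy step good k s := mul_le_mul_right h1 δ
    _ ≤ φ s := drift_sum step good Inv φ δ hbase hclose hdrift t s hs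

end Generic

section Basic

variable {n : ℕ}

lemma fval_le (x : Pt n) : fval x ≤ n := by
  calc fval x ≤ (Finset.univ : Finset (Fin n)).card := Finset.card_filter_le _ _
    _ = n := by simp

lemma gval_eq (x : Pt n) : gval x = (fval x, n - fval x) := rfl

lemma domLe_gval {x y : Pt n} : domLe (gval x) (gval y) ↔ fval x = fval y := by
  have hx := fval_le x; have hy := fval_le y
  unfold domLe gval
  constructor
  · rintro ⟨h1, h2⟩; simp only at h1 h2; omega
  · intro h; simp [h]

lemma not_domLt_gval (x y : Pt n) : ¬ domLt (gval x) (gval y) := by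
  rintro ⟨h1, h2⟩
  have := domLe_gval.mp h1
  exact h2 (by rw [gval_eq, gval_eq, this])

lemma fval_flipBit_false {x : Pt n} {i : Fin n} (h : x i = false) :
    fval (flipBit x i) = fval x + 1 := by
  unfold fval flipBit
  have hset : (Finset.univ.filter fun j => Function.update x i (!x i) j = true)
      = insert i (Finset.univ.filter fun j => x j = true) := by
    ext j
    by_cases hj : j = i
    · subst hj; simp [Function.update_self, h]
    · simp [Function.update_of_ne hj, hj]
  rw [hset, Finset.card_insert_of_notMem (by simp [h])]

lemma fval_flipBit_true {x : Pt n} {i : Fin n} (h : x i = true) :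
    fval (flipBit x i) + 1 = fval x := by
  unfold fval flipBit
  have hset : (Finset.univ.filter fun j => Function.update x i (!x i) j = true)
      = (Finset.univ.filter fun j => x j = true).erase i := by
    ext j
    by_cases hj : j = i
    · subst hj; simp [Function.update_self, h]
    · simp [Function.update_of_ne hj, hj]
  rw [hset, Finset.card_erase_add_one (by simp [h])]

lemma card_false_bits (x : Pt n) :
    (Finset.univ.filter fun i => x i = false).card = n - fval x := by
  have h := Finset.card_filter_add_card_filter_not
    (s := (Finset.univ : Finset (Fin n))) (p := fun i => x i = true)
  have he : (Finset.univ.filter fun i => ¬ x i = true)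
      = (Finset.univ.filter fun i => x i = false) := by
    ext i; simp [Bool.not_eq_true]
  rw [he] at h
  have hcard : (Finset.univ : Finset (Fin n)).card = n := by simp
  have := fval_le x
  unfold fval at *
  omega

/-- The finset of true OneMax values of a population. -/
def Tfin (P : StateR n) : Finset ℕ := (P.map fval).toFinset

lemma mem_Tfin {P : StateR n} {v : ℕ} : v ∈ Tfin P ↔ ∃ x ∈ P, fval x = v := by
  simp [Tfin, Multiset.mem_toFinset, Multiset.mem_map]

lemma Lval_eq_card (P : StateR n) : Lval P = (Tfin P).card := rfl

lemma Tfin_subset_range (P : StateR n) : Tfin P ⊆ Finset.range (n + 1) := by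
  intro v hv
  obtain ⟨x, _, rfl⟩ := mem_Tfin.mp hv
  simp [Nat.lt_succ_iff, fval_le]

lemma Lval_le (P : StateR n) : Lval P ≤ n + 1 := by
  rw [Lval_eq_card]
  calc (Tfin P).card ≤ (Finset.range (n + 1)).card :=
        Finset.card_le_card (Tfin_subset_range P)
    _ = n + 1 := Finset.card_range _

lemma Tfin_mono {P Q : StateR n} (h : ∀ x ∈ P, x ∈ Q) : Tfin P ⊆ Tfin Q := by
  intro v hv
  obtain ⟨x, hx, rfl⟩ := mem_Tfin.mp hv
  exact mem_Tfin.mpr ⟨x, h x hx, rfl⟩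

lemma Lval_mono {P Q : StateR n} (h : ∀ x ∈ P, x ∈ Q) : Lval P ≤ Lval Q :=
  Finset.card_le_card (Tfin_mono h)

lemma not_fCoveredR_iff {P : StateR n} :
    ¬ fCoveredR P ↔ ∃ v, v ≤ n ∧ v ∉ Tfin P := by
  constructor
  · intro h
    by_contra hc
    push_neg at hc
    apply h
    ext k
    simp only [fCoveredR, Set.mem_setOf_eq, Set.mem_Icc]
    constructor
    · rintro ⟨x, hx, rfl⟩; exact ⟨Nat.zero_le _, fval_le x⟩
    · rintro ⟨-, hk⟩
      exact mem_Tfin.mp (hc k hk)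
  · rintro ⟨v, hv, hvT⟩ h
    apply hvT
    apply mem_Tfin.mpr
    have : v ∈ {k : ℕ | ∃ x ∈ P, fval x = k} := by
      rw [h]; exact Set.mem_Icc.mpr ⟨Nat.zero_le _, hv⟩
    exact this

lemma Lval_le_n_of_not_covered {P : StateR n} (h : ¬ fCoveredR P) : Lval P ≤ n := by
  obtain ⟨v, hv, hvT⟩ := not_fCoveredR_iff.mp h
  rw [Lval_eq_card]
  have hss : Tfin P ⊂ Finset.range (n + 1) :=
    ⟨Tfin_subset_range P, fun hsub => hvT (hsub (Finset.mem_range.mpr (by omega)))⟩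
  have := Finset.card_lt_card hss
  simp only [Finset.card_range] at this
  omega

lemma fval_allfalse : fval ((fun _ => false) : Pt n) = 0 := by simp [fval]

lemma fval_alltrue : fval ((fun _ => true) : Pt n) = n := by simp [fval]

lemma fixExtremes_spec (Q : StateR n) :
    goodExR (fixExtremes Q) ∧ Multiset.card (fixExtremes Q) ≤ Multiset.card Q + 2 ∧
      ∀ x ∈ Q, x ∈ fixExtremes Q := by
  have hdef : fixExtremes Q =
      (if ∃ x ∈ (if ∃ x ∈ Q, fval (x : Pt n) = 0 then Q
            else ((fun _ => false) : Pt n) ::ₘ Q), fval (x : Pt n) = n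
       then (if ∃ x ∈ Q, fval (x : Pt n) = 0 then Q
            else ((fun _ => false) : Pt n) ::ₘ Q)
       else ((fun _ => true) : Pt n) ::ₘ
          (if ∃ x ∈ Q, fval (x : Pt n) = 0 then Q
            else ((fun _ => false) : Pt n) ::ₘ Q)) := rfl
  rw [hdef]
  by_cases h1 : ∃ x ∈ Q, fval (x : Pt n) = 0
  · rw [if_pos h1]
    by_cases h2 : ∃ x ∈ Q, fval (x : Pt n) = n
    · rw [if_pos h2]
      exact ⟨⟨h1, h2⟩, by omega, fun x hx => hx⟩
    · rw [if_neg h2]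
      refine ⟨⟨?_, ⟨_, Multiset.mem_cons_self _ _, fval_alltrue⟩⟩, by simp, ?_⟩
      · obtain ⟨x, hx, hfx⟩ := h1
        exact ⟨x, Multiset.mem_cons_of_mem hx, hfx⟩
      · exact fun x hx => Multiset.mem_cons_of_mem hx
  · rw [if_neg h1]
    have h0 : ∃ x ∈ ((fun _ => false) : Pt n) ::ₘ Q, fval (x : Pt n) = 0 :=
      ⟨_, Multiset.mem_cons_self _ _, fval_allfalse⟩
    by_cases h2 : ∃ x ∈ ((fun _ => false) : Pt n) ::ₘ Q, fval (x : Pt n) = n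
    · rw [if_pos h2]
      refine ⟨⟨h0, h2⟩, by simp, fun x hx => Multiset.mem_cons_of_mem hx⟩
    · rw [if_neg h2]
      refine ⟨⟨?_, ⟨_, Multiset.mem_cons_self _ _, fval_alltrue⟩⟩, by simp, ?_⟩
      · obtain ⟨x, hx, hfx⟩ := h0
        exact ⟨x, Multiset.mem_cons_of_mem hx, hfx⟩
      · exact fun x hx => Multiset.mem_cons_of_mem (Multiset.mem_cons_of_mem hx)

lemma Lval_fixExtremes_ge (Q : StateR n) : Lval Q ≤ Lval (fixExtremes Q) :=
  Lval_mono (fixExtremes_spec Q).2.2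

end Basic

section Elim

variable {n : ℕ}

/-- Values represented by an exactly-evaluated pair in `kept`. -/
def exactVals (kept : Multiset (Pt n × (ℕ × ℕ))) : Finset ℕ :=
  ((kept.filter fun y => y.2 = gval y.1).map fun y => y.2.1).toFinset

lemma mem_exactVals {kept : Multiset (Pt n × (ℕ × ℕ))} {v : ℕ} :
    v ∈ exactVals kept ↔ ∃ y ∈ kept, y.2 = gval (y.1 : Pt n) ∧ y.2.1 = v := by
  simp only [exactVals, Multiset.mem_toFinset, Multiset.mem_map, Multiset.mem_filter]
  constructor
  · rintro ⟨y, ⟨hy, he⟩, hv⟩; exact ⟨y, hy, he, hv⟩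
  · rintro ⟨y, hy, he, hv⟩; exact ⟨y, ⟨hy, he⟩, hv⟩

/-- True values of the points in a list. -/
def trueValsL (l : List (Pt n)) : Finset ℕ := (l.map fval).toFinset

lemma mem_trueValsL {l : List (Pt n)} {v : ℕ} :
    v ∈ trueValsL l ↔ ∃ x ∈ l, fval x = v := by
  simp [trueValsL, List.mem_map]

/-- All stored values in `kept` are objective values of actual points. -/
def frontKept (kept : Multiset (Pt n × (ℕ × ℕ))) : Prop :=
  ∀ y ∈ kept, ∃ z : Pt n, (y : Pt n × ℕ × ℕ).2 = gval z

/-- New kept multiset after processing `x` with noisy value `w`. -/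
def keptW (x : Pt n) (w : ℕ × ℕ) (kept : Multiset (Pt n × (ℕ × ℕ))) :
    Multiset (Pt n × (ℕ × ℕ)) :=
  (x, w) ::ₘ kept.filter fun y => ¬ domLe y.2 w

lemma keptW_front {x : Pt n} {z : Pt n} {kept} (hkept : frontKept kept) :
    frontKept (keptW x (gval z) kept) := by
  intro y hy
  rcases Multiset.mem_cons.mp hy with h | h
  · subst h; exact ⟨z, rfl⟩
  · exact hkept y (Multiset.mem_of_mem_filter h)

lemma no_domLt {z : Pt n} {kept} (hkept : frontKept kept) :
    ¬ ∃ y ∈ kept, domLt (gval z) (y : Pt n × ℕ × ℕ).2 := by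
  rintro ⟨y, hy, hlt⟩
  obtain ⟨u, hu⟩ := hkept y hy
  rw [hu] at hlt
  exact not_domLt_gval z u hlt

lemma exact_case_subset {x : Pt n} {kept : Multiset (Pt n × (ℕ × ℕ))} {rest : List (Pt n)}
    (hkept : frontKept kept) :
    exactVals kept ∪ trueValsL (x :: rest)
      ⊆ exactVals (keptW x (gval x) kept) ∪ trueValsL rest := by
  intro v hv
  have hxmem : fval x ∈ exactVals (keptW x (gval x) kept) :=
    mem_exactVals.mpr ⟨(x, gval x), Multiset.mem_cons_self _ _, rfl, rfl⟩
  rcases Finset.mem_union.mp hv with hv | hv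
  · obtain ⟨y, hy, hex, hval⟩ := mem_exactVals.mp hv
    by_cases hvx : v = fval x
    · exact Finset.mem_union_left _ (hvx ▸ hxmem)
    · refine Finset.mem_union_left _ (mem_exactVals.mpr ⟨y, ?_, hex, hval⟩)
      refine Multiset.mem_cons_of_mem (Multiset.mem_filter.mpr ⟨hy, ?_⟩)
      rw [hex]
      intro hle
      apply hvx
      rw [← hval, hex]
      simpa [gval_eq] using domLe_gval.mp hle
  · rcases mem_trueValsL.mp hv with ⟨y, hy, hval⟩
    rcases List.mem_cons.mp hy with h | h
    · subst h; exact Finset.mem_union_left _ (hval ▸ hxmem)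
    · exact Finset.mem_union_right _ (mem_trueValsL.mpr ⟨y, h, hval⟩)

lemma flip_case_subset {x : Pt n} {z : Pt n} {kept : Multiset (Pt n × (ℕ × ℕ))}
    {rest : List (Pt n)} (hkept : frontKept kept) :
    exactVals kept ∪ trueValsL (x :: rest)
      ⊆ insert (fval x) (insert (gval z).1
          (exactVals (keptW x (gval z) kept) ∪ trueValsL rest)) := by
  intro v hv
  rcases Finset.mem_union.mp hv with hv | hv
  · obtain ⟨y, hy, hex, hval⟩ := mem_exactVals.mp hv
    by_cases hvz : v = (gval z).1
    · rw [hvz]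
      exact Finset.mem_insert_of_mem (Finset.mem_insert_self _ _)
    · refine Finset.mem_insert_of_mem (Finset.mem_insert_of_mem
        (Finset.mem_union_left _ (mem_exactVals.mpr ⟨y, ?_, hex, hval⟩)))
      refine Multiset.mem_cons_of_mem (Multiset.mem_filter.mpr ⟨hy, ?_⟩)
      rw [hex]
      intro hle
      apply hvz
      have := domLe_gval.mp hle
      rw [← hval, hex, gval_eq, gval_eq]
      simp [this]
  · rcases mem_trueValsL.mp hv with ⟨y, hy, hval⟩
    rcases List.mem_cons.mp hy with h | h
    · subst h; exact hval ▸ Finset.mem_insert_self _ _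
    · exact Finset.mem_insert_of_mem (Finset.mem_insert_of_mem
        (Finset.mem_union_right _ (mem_trueValsL.mpr ⟨y, h, hval⟩)))

lemma noisyG_support {p : ℝ≥0} {hp : p ≤ 1} {x : Pt n} {w : ℕ × ℕ}
    (h : w ∈ (noisyG p hp x).support) : ∃ z : Pt n, w = gval z := by
  rw [noisyG, PMF.support_map] at h
  obtain ⟨z, -, hz⟩ := h
  exact ⟨z, hz.symm⟩

lemma noisy_ind_le (p : ℝ≥0) (hp : p ≤ 1) (x : Pt n) :
    pexp (noisyG p hp x) (fun w => if w = gval x then 0 else 1) ≤ p := by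
  rw [noisyG, pexp_map, noisyPoint, pexp_bind]
  have hrw : pexp (PMF.bernoulli p (by exact_mod_cast hp))
      (fun b => pexp (if b then mutate x else PMF.pure x)
        fun a => if gval a = gval x then 0 else 1)
      = (1 - (p : ℝ≥0∞)) * pexp (PMF.pure x) (fun a => if gval a = gval x then 0 else 1)
        + (p : ℝ≥0∞) * pexp (mutate x) (fun a => if gval a = gval x then 0 else 1) := by
    rw [pexp, tsum_bool]
    simp [PMF.bernoulli_apply]
  rw [hrw, pexp_pure, if_pos rfl, mul_zero, zero_add]
  calc (p : ℝ≥0∞) * pexp (mutate x) (fun a => if gval a = gval x then 0 else 1)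
      ≤ (p : ℝ≥0∞) * 1 := mul_le_mul_right
        (pexp_le_one fun a => by split <;> simp) _
    _ = p := mul_one _

/-- The core elimination lemma: the expected number of exactly represented values
after elimination is at least the number of values present, up to noise losses. -/
lemma elim_key (p : ℝ≥0) (hp : p ≤ 1) :
    ∀ (l : List (Pt n)) (kept : Multiset (Pt n × (ℕ × ℕ))), frontKept kept →
    ((exactVals kept ∪ trueValsL l).card : ℝ≥0∞)
      ≤ pexp (elimAux p hp l kept) (fun out => ((exactVals out).card : ℝ≥0∞))
        + 2 * p * l.length := by
  intro l
  induction l with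
  | nil =>
    intro kept _
    simp [elimAux, pexp_pure, trueValsL]
  | cons x rest ih =>
    intro kept hkept
    have hbound : ∀ w ∈ (noisyG p hp x).support,
        ((exactVals kept ∪ trueValsL (x :: rest)).card : ℝ≥0∞)
          ≤ pexp (if ∃ y ∈ kept, domLt w (y : Pt n × ℕ × ℕ).2 then elimAux p hp rest kept
              else elimAux p hp rest ((x, w) ::ₘ kept.filter fun y => ¬ domLe y.2 w))
              (fun out => ((exactVals out).card : ℝ≥0∞))
            + 2 * p * rest.length + 2 * (if w = gval x then 0 else 1) := by
      intro w hw
      obtain ⟨z, rfl⟩ := noisyG_support hw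
      rw [if_neg (no_domLt hkept)]
      have hfront : frontKept (keptW x (gval z) kept) := keptW_front hkept
      have hIH := ih (keptW x (gval z) kept) hfront
      by_cases hwx : gval z = gval x
      · rw [if_pos hwx, mul_zero, add_zero]
        have hsub := exact_case_subset (x := x) (rest := rest) hkept
        rw [hwx] at hIH ⊢
        calc ((exactVals kept ∪ trueValsL (x :: rest)).card : ℝ≥0∞)
            ≤ ((exactVals (keptW x (gval x) kept) ∪ trueValsL rest).card : ℝ≥0∞) := by
              exact_mod_cast Nat.cast_le.mpr (Finset.card_le_card hsub)
          _ ≤ _ := hIH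
      · rw [if_neg hwx, mul_one]
        have hsub := flip_case_subset (x := x) (z := z) (rest := rest) hkept
        have hcard : (exactVals kept ∪ trueValsL (x :: rest)).card
            ≤ (exactVals (keptW x (gval z) kept) ∪ trueValsL rest).card + 2 := by
          calc (exactVals kept ∪ trueValsL (x :: rest)).card
              ≤ (insert (fval x) (insert (gval z).1
                  (exactVals (keptW x (gval z) kept) ∪ trueValsL rest))).card :=
                Finset.card_le_card hsub
            _ ≤ (insert (gval z).1
                  (exactVals (keptW x (gval z) kept) ∪ trueValsL rest)).card + 1 :=
                Finset.card_insert_le _ _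
            _ ≤ (exactVals (keptW x (gval z) kept) ∪ trueValsL rest).card + 1 + 1 :=
                add_le_add_left (Finset.card_insert_le _ _) 1
        calc ((exactVals kept ∪ trueValsL (x :: rest)).card : ℝ≥0∞)
            ≤ ((exactVals (keptW x (gval z) kept) ∪ trueValsL rest).card : ℝ≥0∞) + 2 := by
              exact_mod_cast Nat.cast_le.mpr hcard
          _ ≤ pexp (elimAux p hp rest (keptW x (gval z) kept))
                (fun out => ((exactVals out).card : ℝ≥0∞)) + 2 * p * rest.length + 2 := by
              rw [keptW] at hIH ⊢
              exact add_le_add_left hIH 2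
    have h1 : ((exactVals kept ∪ trueValsL (x :: rest)).card : ℝ≥0∞)
        ≤ pexp (noisyG p hp x) (fun w =>
            pexp (if ∃ y ∈ kept, domLt w (y : Pt n × ℕ × ℕ).2 then elimAux p hp rest kept
              else elimAux p hp rest ((x, w) ::ₘ kept.filter fun y => ¬ domLe y.2 w))
              (fun out => ((exactVals out).card : ℝ≥0∞))
            + 2 * p * rest.length + 2 * (if w = gval x then 0 else 1)) :=
      const_le_pexp hbound
    have h2 : pexp (noisyG p hp x) (fun w =>
            pexp (if ∃ y ∈ kept, domLt w (y : Pt n × ℕ × ℕ).2 then elimAux p hp rest kept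
              else elimAux p hp rest ((x, w) ::ₘ kept.filter fun y => ¬ domLe y.2 w))
              (fun out => ((exactVals out).card : ℝ≥0∞))
            + 2 * p * rest.length + 2 * (if w = gval x then 0 else 1))
        = pexp (noisyG p hp x) (fun w =>
            pexp (if ∃ y ∈ kept, domLt w (y : Pt n × ℕ × ℕ).2 then elimAux p hp rest kept
              else elimAux p hp rest ((x, w) ::ₘ kept.filter fun y => ¬ domLe y.2 w))
              (fun out => ((exactVals out).card : ℝ≥0∞)))
          + 2 * p * rest.length
          + 2 * pexp (noisyG p hp x) (fun w => if w = gval x then 0 else 1) := by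
      rw [pexp_add, pexp_add, pexp_const]
      congr 1
      rw [pexp, pexp, ← ENNReal.tsum_mul_left]
      exact tsum_congr fun w => by ring
    have h3 : pexp (elimAux p hp (x :: rest) kept)
          (fun out => ((exactVals out).card : ℝ≥0∞))
        = pexp (noisyG p hp x) (fun w =>
            pexp (if ∃ y ∈ kept, domLt w (y : Pt n × ℕ × ℕ).2 then elimAux p hp rest kept
              else elimAux p hp rest ((x, w) ::ₘ kept.filter fun y => ¬ domLe y.2 w))
              (fun out => ((exactVals out).card : ℝ≥0∞))) := by
      rw [elimAux, pexp_bind]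
    calc ((exactVals kept ∪ trueValsL (x :: rest)).card : ℝ≥0∞)
        ≤ _ := h1
      _ = _ := h2
      _ ≤ pexp (elimAux p hp (x :: rest) kept)
            (fun out => ((exactVals out).card : ℝ≥0∞))
          + 2 * p * rest.length + 2 * p := by
          rw [← h3]
          exact add_le_add_right (mul_le_mul_right (noisy_ind_le p hp x) 2) _
      _ = pexp (elimAux p hp (x :: rest) kept)
            (fun out => ((exactVals out).card : ℝ≥0∞)) + 2 * p * (x :: rest).length := by
          rw [List.length_cons, add_assoc]
          congr 1
          push_cast
          ring

lemma exactVals_card_le_Lval (kept : Multiset (Pt n × (ℕ × ℕ))) :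
    (exactVals kept).card ≤ Lval (kept.map Prod.fst) := by
  rw [Lval_eq_card]
  apply Finset.card_le_card
  intro v hv
  obtain ⟨y, hy, hex, hval⟩ := mem_exactVals.mp hv
  apply mem_Tfin.mpr
  refine ⟨y.1, Multiset.mem_map_of_mem _ hy, ?_⟩
  rw [← hval, hex, gval_eq]

/-- The invariant that kept pairs carry pairwise distinct front values. -/
def keptInv (kept : Multiset (Pt n × (ℕ × ℕ))) : Prop :=
  frontKept kept ∧ (kept.map fun y => y.2.1).Nodup

lemma keptInv_keptW {x : Pt n} {z : Pt n} {kept} (h : keptInv kept) :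
    keptInv (keptW x (gval z) kept) := by
  refine ⟨keptW_front h.1, ?_⟩
  rw [keptW, Multiset.map_cons, Multiset.nodup_cons]
  constructor
  · intro hmem
    obtain ⟨y, hy, hval⟩ := Multiset.mem_map.mp hmem
    have hyk := Multiset.mem_of_mem_filter hy
    have hnd := (Multiset.mem_filter.mp hy).2
    obtain ⟨u, hu⟩ := h.1 y hyk
    apply hnd
    rw [hu]
    apply domLe_gval.mpr
    have : (gval u).1 = (gval z).1 := by rw [← hu]; exact hval
    simpa [gval_eq] using this
  · exact Multiset.nodup_of_le (Multiset.map_le_map (Multiset.filter_le _ _)) h.2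

lemma elim_support_keptInv (p : ℝ≥0) (hp : p ≤ 1) :
    ∀ (l : List (Pt n)) (kept : Multiset (Pt n × (ℕ × ℕ))), keptInv kept →
      ∀ out ∈ (elimAux p hp l kept).support, keptInv out := by
  intro l
  induction l with
  | nil =>
    intro kept h out hout
    rw [elimAux, PMF.support_pure, Set.mem_singleton_iff] at hout
    subst hout; exact h
  | cons x rest ih =>
    intro kept h out hout
    rw [elimAux, PMF.support_bind] at hout
    simp only [Set.mem_iUnion] at hout
    obtain ⟨w, hw, hout⟩ := hout
    obtain ⟨z, rfl⟩ := noisyG_support hw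
    rw [if_neg (no_domLt h.1)] at hout
    exact ih _ (keptInv_keptW h) out hout

lemma keptInv_card {kept : Multiset (Pt n × (ℕ × ℕ))} (h : keptInv kept) :
    Multiset.card kept ≤ n + 1 := by
  have hcard : Multiset.card kept = (kept.map fun y => y.2.1).toFinset.card := by
    rw [Multiset.toFinset_card_of_nodup h.2, Multiset.card_map]
  rw [hcard]
  have hsub : (kept.map fun y => y.2.1).toFinset ⊆ Finset.range (n + 1) := by
    intro v hv
    obtain ⟨y, hy, hval⟩ := Multiset.mem_map.mp (Multiset.mem_toFinset.mp hv)
    obtain ⟨z, hz⟩ := h.1 y hy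
    rw [← hval, hz]
    simp [gval_eq, Nat.lt_succ_iff, fval_le]
  calc (kept.map fun y => y.2.1).toFinset.card ≤ (Finset.range (n + 1)).card :=
        Finset.card_le_card hsub
    _ = n + 1 := Finset.card_range _

lemma stepR_support_card (p : ℝ≥0) (hp : p ≤ 1) (P : StateR n) (hP : P ≠ 0) :
    ∀ Q ∈ (stepR p hp P).support, Multiset.card Q ≤ n + 1 := by
  intro Q hQ
  rw [stepR, dif_neg hP, PMF.support_bind] at hQ
  simp only [Set.mem_iUnion] at hQ
  obtain ⟨x, -, hQ⟩ := hQ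
  rw [PMF.support_bind] at hQ
  simp only [Set.mem_iUnion] at hQ
  obtain ⟨x', -, hQ⟩ := hQ
  rw [PMF.support_bind] at hQ
  simp only [Set.mem_iUnion] at hQ
  obtain ⟨l, -, hQ⟩ := hQ
  rw [PMF.support_map] at hQ
  obtain ⟨kept, hkept, rfl⟩ := hQ
  have hInv : keptInv (0 : Multiset (Pt n × (ℕ × ℕ))) := by
    constructor
    · intro y hy; simp at hy
    · simp
  have := keptInv_card (elim_support_keptInv p hp l 0 hInv kept hkept)
  rw [Multiset.card_map]
  exact this

end Elim

section Mutate

variable {n : ℕ}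

lemma pexp_mutate (hn : 0 < n) (x : Pt n) (f : Pt n → ℝ≥0∞) :
    pexp (mutate x) f = ∑ i : Fin n, ((n : ℝ≥0∞))⁻¹ * f (flipBit x i) := by
  have hne : (Finset.univ : Finset (Fin n)).Nonempty := ⟨⟨0, hn⟩, Finset.mem_univ _⟩
  rw [mutate, dif_pos hne, pexp_map, pexp, tsum_fintype]
  refine Finset.sum_congr rfl fun i _ => ?_
  rw [PMF.uniformOfFinset_apply]
  simp [Finset.card_univ]

lemma mutate_ind_ge (hn : 0 < n) (x : Pt n) (T : Finset ℕ) (u : ℕ)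
    (hu : u ∉ T) (S : Finset (Fin n)) (hS : ∀ i ∈ S, fval (flipBit x i) = u) :
    (S.card : ℝ≥0∞) * ((n : ℝ≥0∞))⁻¹
      ≤ pexp (mutate x) (fun x' => if fval x' ∈ T then 0 else 1) := by
  rw [pexp_mutate hn]
  calc (S.card : ℝ≥0∞) * ((n : ℝ≥0∞))⁻¹
      = ∑ _i ∈ S, ((n : ℝ≥0∞))⁻¹ := by
        rw [Finset.sum_const, nsmul_eq_mul]
    _ ≤ ∑ i ∈ S, ((n : ℝ≥0∞))⁻¹ *
          (if fval (flipBit x i) ∈ T then 0 else 1) := by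
        refine Finset.sum_le_sum fun i hi => ?_
        rw [hS i hi, if_neg hu, mul_one]
    _ ≤ ∑ i : Fin n, ((n : ℝ≥0∞))⁻¹ *
          (if fval (flipBit x i) ∈ T then 0 else 1) :=
        Finset.sum_le_sum_of_subset (Finset.subset_univ S)

lemma up_boundary {T : Finset ℕ} {v : ℕ} (hvT : v ∉ T) :
    ∀ d c, c ∈ T → c < v → v - c ≤ d → ∃ a ∈ T, a < v ∧ a + 1 ∉ T := by
  intro d
  induction d with
  | zero => intro c _ hcv hd; omega
  | succ d ih =>
    intro c hc hcv _
    by_cases h1 : c + 1 ∈ T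
    · have hlt : c + 1 < v := by
        rcases Nat.lt_or_ge (c + 1) v with h | h
        · exact h
        · have : c + 1 = v := by omega
          exact absurd (this ▸ h1) hvT
      exact ih (c + 1) h1 hlt (by omega)
    · exact ⟨c, hc, hcv, h1⟩

lemma down_boundary {T : Finset ℕ} {v : ℕ} (hvT : v ∉ T) :
    ∀ d c, c ∈ T → v < c → c - v ≤ d → ∃ b ∈ T, v < b ∧ b - 1 ∉ T := by
  intro d
  induction d with
  | zero => intro c _ hcv hd; omega
  | succ d ih =>
    intro c hc hcv _
    by_cases h1 : c - 1 ∈ T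
    · have hlt : v < c - 1 := by
        rcases Nat.lt_or_ge v (c - 1) with h | h
        · exact h
        · have : c - 1 = v := by omega
          exact absurd (this ▸ h1) hvT
      exact ih (c - 1) h1 hlt (by omega)
    · exact ⟨c, hc, hcv, h1⟩

/-- From a non-covered population containing both extremes, there is a boundary value
whose suitable mutations are at least `n/2` in number. -/
lemma boundary_exists (T : Finset ℕ) (h0 : 0 ∈ T) (hN : n ∈ T)
    {v : ℕ} (hv : v ≤ n) (hvT : v ∉ T) :
    ∃ a ∈ T, ∃ u, u ∉ T ∧
      ((u = a + 1 ∧ n ≤ 2 * (n - a)) ∨ (a = u + 1 ∧ n ≤ 2 * a)) := by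
  have hv0 : v ≠ 0 := fun h => hvT (h ▸ h0)
  have hvn : v ≠ n := fun h => hvT (h ▸ hN)
  by_cases hcase : 2 * v ≤ n
  · obtain ⟨a, haT, hav, ha1⟩ := up_boundary hvT v 0 h0 (by omega) (by omega)
    exact ⟨a, haT, a + 1, ha1, Or.inl ⟨rfl, by omega⟩⟩
  · obtain ⟨b, hbT, hvb, hb1⟩ := down_boundary hvT n n hN (by omega) (by omega)
    have hb0 : 1 ≤ b := by omega
    exact ⟨b, hbT, b - 1, hb1, Or.inr ⟨by omega, by omega⟩⟩

lemma half_le_mul_inv {k m : ℕ} (hm : 0 < m) (h : m ≤ 2 * k) :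
    (2 : ℝ≥0∞)⁻¹ ≤ (k : ℝ≥0∞) * ((m : ℝ≥0∞))⁻¹ := by
  rw [← div_eq_mul_inv]
  rw [ENNReal.le_div_iff_mul_le (Or.inl (by exact_mod_cast hm.ne'))
    (Or.inl (ENNReal.natCast_ne_top m))]
  calc (2 : ℝ≥0∞)⁻¹ * m ≤ (2 : ℝ≥0∞)⁻¹ * ((2 * k : ℕ) : ℝ≥0∞) :=
        mul_le_mul_right (by exact_mod_cast h) _
    _ = k := by
        push_cast
        rw [← mul_assoc, ENNReal.inv_mul_cancel two_ne_zero ENNReal.ofNat_ne_top, one_mul]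

/-- Lower bound on the probability that mutation of a suitable parent creates a value
outside `T`.  Here `x` has value `a` on the boundary. -/
lemma mutate_gain (hn : 0 < n) {T : Finset ℕ} {a u : ℕ} (x : Pt n) (hx : fval x = a)
    (hu : u ∉ T)
    (hcase : (u = a + 1 ∧ n ≤ 2 * (n - a)) ∨ (a = u + 1 ∧ n ≤ 2 * a)) :
    (2 : ℝ≥0∞)⁻¹ ≤ pexp (mutate x) (fun x' => if fval x' ∈ T then 0 else 1) := by
  rcases hcase with ⟨rfl, hcnt⟩ | ⟨hau, hcnt⟩
  · -- flip a false bit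
    set S := Finset.univ.filter fun i => x i = false with hs
    have hcard : S.card = n - a := by rw [hs, card_false_bits, hx]
    have hSgood : ∀ i ∈ S, fval (flipBit x i) = a + 1 := by
      intro i hi
      rw [fval_flipBit_false (Finset.mem_filter.mp hi).2, hx]
    refine le_trans ?_ (mutate_ind_ge hn x T (a + 1) hu S hSgood)
    rw [hcard]
    exact half_le_mul_inv hn hcnt
  · -- flip a true bit
    set S := Finset.univ.filter fun i => x i = true with hs
    have hcard : S.card = a := by rw [hs, ← hx]; rfl
    have hSgood : ∀ i ∈ S, fval (flipBit x i) = u := by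
      intro i hi
      have := fval_flipBit_true (Finset.mem_filter.mp hi).2
      omega
    refine le_trans ?_ (mutate_ind_ge hn x T u hu S hSgood)
    rw [hcard]
    exact half_le_mul_inv hn hcnt

end Mutate

section DriftChain

variable {n : ℕ}

lemma pexp_add_const {α : Type*} (μ : PMF α) (f : α → ℝ≥0∞) (c : ℝ≥0∞) :
    pexp μ (fun a => f a + c) = pexp μ f + c := by
  rw [pexp_add μ f (fun _ => c), pexp_const]

lemma pexp_const_add {α : Type*} (μ : PMF α) (f : α → ℝ≥0∞) (c : ℝ≥0∞) :
    pexp μ (fun a => c + f a) = c + pexp μ f := by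
  rw [pexp_add μ (fun _ => c) f, pexp_const]

lemma card_insert_ennreal (T : Finset ℕ) (u : ℕ) :
    (((insert u T).card : ℕ) : ℝ≥0∞) = (T.card : ℝ≥0∞) + (if u ∈ T then 0 else 1) := by
  by_cases h : u ∈ T
  · rw [Finset.insert_eq_self.mpr h, if_pos h, add_zero]
  · rw [Finset.card_insert_of_notMem h, if_neg h]
    push_cast
    ring

/-- Facts about permutation lists in the support of the shuffling `PMF`. -/
lemma perm_support_facts (P : StateR n) (x' : Pt n) (l : List (Pt n))
    (hl : l ∈ (PMF.ofMultiset (↑((x' ::ₘ P).toList.permutations) : Multiset (List (Pt n)))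
      (by
        simp only [ne_eq, Multiset.coe_eq_zero]
        exact List.ne_nil_of_mem
          (List.mem_permutations.mpr (List.Perm.refl _)))).support) :
    trueValsL l = insert (fval x') (Tfin P) ∧ l.length = Multiset.card P + 1 := by
  rw [PMF.support_ofMultiset] at hl
  have hmem : l ∈ (x' ::ₘ P).toList.permutations := by
    simpa using hl
  have hperm : l.Perm ((x' ::ₘ P).toList) := List.mem_permutations.mp hmem
  constructor
  · ext v
    rw [mem_trueValsL]
    simp only [Finset.mem_insert, mem_Tfin]
    constructor
    · rintro ⟨y, hy, rfl⟩
      have hy2 : y ∈ (x' ::ₘ P) := by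
        rw [← Multiset.mem_toList]
        exact hperm.subset hy
      rcases Multiset.mem_cons.mp hy2 with h | h
      · left; rw [h]
      · right; exact ⟨y, h, rfl⟩
    · rintro (h | ⟨y, hy, rfl⟩)
      · refine ⟨x', ?_, h.symm⟩
        apply hperm.mem_iff.mpr
        rw [Multiset.mem_toList]
        exact Multiset.mem_cons_self _ _
      · refine ⟨y, ?_, rfl⟩
        apply hperm.mem_iff.mpr
        rw [Multiset.mem_toList]
        exact Multiset.mem_cons_of_mem hy
  · rw [hperm.length_eq, Multiset.length_toList, Multiset.card_cons]

lemma goodExR_ne_zero {P : StateR n} (h : goodExR P) : P ≠ 0 := by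
  obtain ⟨⟨x, hx, -⟩, -⟩ := h
  intro h0
  rw [h0] at hx
  simp at hx

lemma ofMultiset_ge {α : Type*} (P : Multiset α) (hP : P ≠ 0) {x : α} (hx : x ∈ P) :
    (((Multiset.card P : ℕ) : ℝ≥0∞))⁻¹ ≤ (PMF.ofMultiset P hP) x := by
  rw [PMF.ofMultiset_apply, ← one_div]
  apply ENNReal.div_le_div_right
  exact_mod_cast Multiset.one_le_count_iff_mem.mpr hx

/-- Key drift inequality for a single `stepR` iteration. -/
lemma stepR_drift (p : ℝ≥0) (hp : p ≤ 1) (hn : 2 ≤ n)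
    (hpsmall : (p : ℝ) ≤ (1 / 200) / (n : ℝ) ^ 2)
    (P : StateR n) (hex : goodExR P) (hcard : Multiset.card P ≤ n + 3)
    (hcov : ¬ fCoveredR P) :
    (Lval P : ℝ≥0∞) + (((20 * n : ℕ) : ℝ≥0∞))⁻¹
      ≤ pexp (stepR p hp P) (fun Q => (Lval Q : ℝ≥0∞)) := by
  have hn0 : 0 < n := by omega
  have hP0 : P ≠ 0 := goodExR_ne_zero hex
  set T := Tfin P with hT
  set L := Lval P with hL
  -- the boundary parent
  have h0T : 0 ∈ T := by
    obtain ⟨⟨x, hx, hfx⟩, -⟩ := hex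
    exact mem_Tfin.mpr ⟨x, hx, hfx⟩
  have hnT : n ∈ T := by
    obtain ⟨-, ⟨x, hx, hfx⟩⟩ := hex
    exact mem_Tfin.mpr ⟨x, hx, hfx⟩
  obtain ⟨v, hv, hvT⟩ := not_fCoveredR_iff.mp hcov
  obtain ⟨a, haT, u, huT, hcase⟩ := boundary_exists T h0T hnT hv hvT
  obtain ⟨x₀, hx₀P, hx₀⟩ := mem_Tfin.mp haT
  -- gain step
  set F : Pt n → ℝ≥0∞ := fun x =>
    pexp (mutate x) (fun x' => (((insert (fval x') T).card : ℕ) : ℝ≥0∞)) with hF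
  have hFL : ∀ x, (L : ℝ≥0∞) ≤ F x := by
    intro x
    refine const_le_pexp fun x' _ => ?_
    have : T.card ≤ (insert (fval x') T).card :=
      Finset.card_le_card (Finset.subset_insert _ _)
    rw [hL, Lval_eq_card, ← hT]
    exact_mod_cast this
  have hFx₀ : (L : ℝ≥0∞) + (2 : ℝ≥0∞)⁻¹ ≤ F x₀ := by
    have hrw : F x₀ = (L : ℝ≥0∞)
        + pexp (mutate x₀) (fun x' => if fval x' ∈ T then 0 else 1) := by
      rw [hF]
      simp only
      rw [show (fun x' => (((insert (fval x') T).card : ℕ) : ℝ≥0∞))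
          = fun x' => (L : ℝ≥0∞) + (if fval x' ∈ T then 0 else 1) from ?_]
      · rw [pexp_const_add]
      · funext x'
        rw [card_insert_ennreal T (fval x'), hL, Lval_eq_card, ← hT]
    rw [hrw]
    exact add_le_add_right (mutate_gain hn0 x₀ hx₀ huT hcase) _
  -- parent selection: gain bound
  have hmem_parent : (((Multiset.card P : ℕ) : ℝ≥0∞))⁻¹ ≤ (PMF.ofMultiset P hP0) x₀ :=
    ofMultiset_ge P hP0 hx₀P
  have hgain : (L : ℝ≥0∞) + (((5 * n : ℕ) : ℝ≥0∞))⁻¹ ≤ pexp (PMF.ofMultiset P hP0) F := by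
    have hpt : ∀ x, (L : ℝ≥0∞) + (if x = x₀ then (2 : ℝ≥0∞)⁻¹ else 0) ≤ F x := by
      intro x
      by_cases hx : x = x₀
      · subst hx; rw [if_pos rfl]; exact hFx₀
      · rw [if_neg hx, add_zero]; exact hFL x
    have hlow : (((5 * n : ℕ) : ℝ≥0∞))⁻¹ ≤ (PMF.ofMultiset P hP0) x₀ * (2 : ℝ≥0∞)⁻¹ := by
      have hcc : ((Multiset.card P * 2 : ℕ) : ℝ≥0∞) ≤ ((5 * n : ℕ) : ℝ≥0∞) := by
        have : Multiset.card P * 2 ≤ 5 * n := by omega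
        exact_mod_cast this
      calc (((5 * n : ℕ) : ℝ≥0∞))⁻¹
          ≤ (((Multiset.card P * 2 : ℕ) : ℝ≥0∞))⁻¹ := ENNReal.inv_le_inv.mpr hcc
        _ = (((Multiset.card P : ℕ) : ℝ≥0∞))⁻¹ * (2 : ℝ≥0∞)⁻¹ := by
            push_cast
            rw [ENNReal.mul_inv (Or.inr (by norm_num)) (Or.inl (ENNReal.natCast_ne_top _))]
        _ ≤ (PMF.ofMultiset P hP0) x₀ * (2 : ℝ≥0∞)⁻¹ := mul_le_mul_left hmem_parent _
    calc (L : ℝ≥0∞) + (((5 * n : ℕ) : ℝ≥0∞))⁻¹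
        ≤ (L : ℝ≥0∞) + (PMF.ofMultiset P hP0) x₀ * (2 : ℝ≥0∞)⁻¹ := add_le_add_right hlow _
      _ = pexp (PMF.ofMultiset P hP0)
            (fun x => (L : ℝ≥0∞) + (if x = x₀ then (2 : ℝ≥0∞)⁻¹ else 0)) := by
          rw [pexp_const_add, pexp_indicator]
      _ ≤ pexp (PMF.ofMultiset P hP0) F := pexp_mono_support fun x _ => hpt x
  -- noise bound
  set c : ℕ := Multiset.card P + 1 with hc
  have hnoise : pexp (PMF.ofMultiset P hP0) F
      ≤ pexp (stepR p hp P) (fun Q => (Lval Q : ℝ≥0∞)) + 2 * (p : ℝ≥0∞) * (c : ℝ≥0∞) := by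
    have hstep : pexp (stepR p hp P) (fun Q => (Lval Q : ℝ≥0∞))
        = pexp (PMF.ofMultiset P hP0) (fun x => pexp (mutate x) (fun x' =>
            pexp (PMF.ofMultiset
                (↑((x' ::ₘ P).toList.permutations) : Multiset (List (Pt n)))
                (by
                  simp only [ne_eq, Multiset.coe_eq_zero]
                  exact List.ne_nil_of_mem
                    (List.mem_permutations.mpr (List.Perm.refl _))))
              (fun l => pexp (elimAux p hp l 0)
                (fun kept => (Lval (kept.map Prod.fst) : ℝ≥0∞))))) := by
      rw [stepR, dif_neg hP0]
      simp only [pexp_bind, pexp_map]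
    rw [hstep, ← pexp_add_const]
    refine pexp_mono_support fun x _ => ?_
    simp only [hF]
    rw [← pexp_add_const]
    refine pexp_mono_support fun x' _ => ?_
    -- per mutated point x' : card of insert ≤ expected Lval + noise
    rw [← pexp_add_const]
    refine const_le_pexp fun l hl => ?_
    obtain ⟨hTl, hlen⟩ := perm_support_facts P x' l hl
    have hfront0 : frontKept (0 : Multiset (Pt n × (ℕ × ℕ))) := by
      intro y hy; simp at hy
    have hkey := elim_key p hp l 0 hfront0
    have hexact0 : exactVals (0 : Multiset (Pt n × (ℕ × ℕ))) = ∅ := by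
      rfl
    rw [hexact0, Finset.empty_union, hTl, hlen] at hkey
    refine le_trans hkey ?_
    refine add_le_add ?_ ?_
    · refine pexp_mono_support fun kept _ => ?_
      exact_mod_cast Nat.cast_le.mpr (exactVals_card_le_Lval kept)
    · rw [hc]
  -- arithmetic on the noise term
  have hpnn : p * ((200 * n ^ 2 : ℕ) : ℝ≥0) ≤ 1 := by
    rw [← NNReal.coe_le_coe]
    push_cast
    have h2 : (0 : ℝ) < (n : ℝ) ^ 2 := by positivity
    have h3 : (0 : ℝ) ≤ (p : ℝ) := p.coe_nonneg
    rw [div_div] at hpsmall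
    calc (p : ℝ) * (200 * (n : ℝ) ^ 2) ≤ (1 / (200 * (n : ℝ) ^ 2)) * (200 * (n : ℝ) ^ 2) := by
          apply mul_le_mul_of_nonneg_right _ (by positivity)
          exact hpsmall
      _ = 1 := by field_simp
  have hp1 : (p : ℝ≥0∞) * ((200 * n ^ 2 : ℕ) : ℝ≥0∞) ≤ 1 := by
    have h := ENNReal.coe_le_coe.mpr hpnn
    push_cast at h
    exact_mod_cast h
  have hnoise2 : 2 * (p : ℝ≥0∞) * (c : ℝ≥0∞) ≤ (((10 * n : ℕ) : ℝ≥0∞))⁻¹ := by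
    rw [ENNReal.le_inv_iff_mul_le]
    have hnat : 2 * c * (10 * n) ≤ 200 * n ^ 2 := by nlinarith [hcard, hn]
    calc 2 * (p : ℝ≥0∞) * (c : ℝ≥0∞) * ((10 * n : ℕ) : ℝ≥0∞)
        = (p : ℝ≥0∞) * ((2 * c * (10 * n) : ℕ) : ℝ≥0∞) := by push_cast; ring
      _ ≤ (p : ℝ≥0∞) * ((200 * n ^ 2 : ℕ) : ℝ≥0∞) :=
          mul_le_mul_right (by exact_mod_cast hnat) _
      _ ≤ 1 := hp1
  have hsplit : (((20 * n : ℕ) : ℝ≥0∞))⁻¹ + (((10 * n : ℕ) : ℝ≥0∞))⁻¹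
      ≤ (((5 * n : ℕ) : ℝ≥0∞))⁻¹ := by
    have h4 : ((20 * n : ℕ) : ℝ≥0∞) = 4 * ((5 * n : ℕ) : ℝ≥0∞) := by push_cast; ring
    have h2 : ((10 * n : ℕ) : ℝ≥0∞) = 2 * ((5 * n : ℕ) : ℝ≥0∞) := by push_cast; ring
    rw [h4, h2, ENNReal.mul_inv (Or.inl (by norm_num)) (Or.inl (by norm_num)),
        ENNReal.mul_inv (Or.inl (by norm_num)) (Or.inl (by norm_num)), ← add_mul]
    have h14 : (4 : ℝ≥0∞)⁻¹ ≤ (2 : ℝ≥0∞)⁻¹ := ENNReal.inv_le_inv.mpr (by norm_num)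
    calc ((4 : ℝ≥0∞)⁻¹ + (2 : ℝ≥0∞)⁻¹) * (((5 * n : ℕ) : ℝ≥0∞))⁻¹
        ≤ ((2 : ℝ≥0∞)⁻¹ + (2 : ℝ≥0∞)⁻¹) * (((5 * n : ℕ) : ℝ≥0∞))⁻¹ :=
          mul_le_mul_left (add_le_add_left h14 _) _
      _ = 1 * (((5 * n : ℕ) : ℝ≥0∞))⁻¹ := by rw [ENNReal.inv_two_add_inv_two]
      _ = _ := one_mul _
  have harith : (((20 * n : ℕ) : ℝ≥0∞))⁻¹ + 2 * (p : ℝ≥0∞) * (c : ℝ≥0∞)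
      ≤ (((5 * n : ℕ) : ℝ≥0∞))⁻¹ :=
    le_trans (add_le_add_right hnoise2 _) hsplit
  -- combine and cancel the noise term
  have hfin : (L : ℝ≥0∞) + (((20 * n : ℕ) : ℝ≥0∞))⁻¹ + 2 * (p : ℝ≥0∞) * (c : ℝ≥0∞)
      ≤ pexp (stepR p hp P) (fun Q => (Lval Q : ℝ≥0∞)) + 2 * (p : ℝ≥0∞) * (c : ℝ≥0∞) := by
    calc (L : ℝ≥0∞) + (((20 * n : ℕ) : ℝ≥0∞))⁻¹ + 2 * (p : ℝ≥0∞) * (c : ℝ≥0∞)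
        = (L : ℝ≥0∞) + ((((20 * n : ℕ) : ℝ≥0∞))⁻¹ + 2 * (p : ℝ≥0∞) * (c : ℝ≥0∞)) := by ring
      _ ≤ (L : ℝ≥0∞) + (((5 * n : ℕ) : ℝ≥0∞))⁻¹ := add_le_add_right harith _
      _ ≤ pexp (PMF.ofMultiset P hP0) F := hgain
      _ ≤ _ := hnoise
  have hne : 2 * (p : ℝ≥0∞) * (c : ℝ≥0∞) ≠ ⊤ :=
    ENNReal.mul_ne_top (ENNReal.mul_ne_top (by norm_num) ENNReal.coe_ne_top)
      (ENNReal.natCast_ne_top _)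
  exact (ENNReal.add_le_add_iff_right hne).mp hfin

/-- Drift inequality for the potential `n + 1 - L` under one `stepK` iteration. -/
lemma stepK_drift (p : ℝ≥0) (hp : p ≤ 1) (hn : 2 ≤ n)
    (hpsmall : (p : ℝ) ≤ (1 / 200) / (n : ℝ) ^ 2) (K : ℕ) (st : ℕ × StateR n)
    (hex : goodExR st.2) (hcard : Multiset.card st.2 ≤ n + 3) (hcov : ¬ fCoveredR st.2) :
    pexp (stepK p hp K st) (fun s' => ((n + 1 - Lval s'.2 : ℕ) : ℝ≥0∞))
      + (((20 * n : ℕ) : ℝ≥0∞))⁻¹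
      ≤ ((n + 1 - Lval st.2 : ℕ) : ℝ≥0∞) := by
  have hP0 : st.2 ≠ 0 := goodExR_ne_zero hex
  have h1 : pexp (stepK p hp K st) (fun s' => ((n + 1 - Lval s'.2 : ℕ) : ℝ≥0∞))
      ≤ pexp (stepR p hp st.2) (fun Q => ((n + 1 - Lval Q : ℕ) : ℝ≥0∞)) := by
    rw [stepK, pexp_map]
    refine pexp_mono_support fun Q _ => ?_
    have hmono : Lval Q ≤ Lval (if st.1 < K then fixExtremes Q else Q) := by
      split_ifs
      · exact Lval_fixExtremes_ge Q
      · exact le_rfl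
    exact Nat.cast_le.mpr (Nat.sub_le_sub_left hmono _)
  have h2 : pexp (stepR p hp st.2) (fun Q => ((n + 1 - Lval Q : ℕ) : ℝ≥0∞))
      + pexp (stepR p hp st.2) (fun Q => (Lval Q : ℝ≥0∞)) = (((n + 1 : ℕ)) : ℝ≥0∞) := by
    rw [← pexp_add]
    have hfun : (fun Q : StateR n => ((n + 1 - Lval Q : ℕ) : ℝ≥0∞) + (Lval Q : ℝ≥0∞))
        = fun _ => (((n + 1 : ℕ)) : ℝ≥0∞) := by
      funext Q
      rw [ENNReal.natCast_sub]
      exact tsub_add_cancel_of_le (Nat.cast_le.mpr (Lval_le Q))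
    rw [hfun, pexp_const]
  have h3 := stepR_drift p hp hn hpsmall st.2 hex hcard hcov
  have h4 : pexp (stepK p hp K st) (fun s' => ((n + 1 - Lval s'.2 : ℕ) : ℝ≥0∞))
      + (((20 * n : ℕ) : ℝ≥0∞))⁻¹ + (Lval st.2 : ℝ≥0∞) ≤ (((n + 1 : ℕ)) : ℝ≥0∞) := by
    calc pexp (stepK p hp K st) (fun s' => ((n + 1 - Lval s'.2 : ℕ) : ℝ≥0∞))
          + (((20 * n : ℕ) : ℝ≥0∞))⁻¹ + (Lval st.2 : ℝ≥0∞)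
        = pexp (stepK p hp K st) (fun s' => ((n + 1 - Lval s'.2 : ℕ) : ℝ≥0∞))
          + ((Lval st.2 : ℝ≥0∞) + (((20 * n : ℕ) : ℝ≥0∞))⁻¹) := by ring
      _ ≤ pexp (stepR p hp st.2) (fun Q => ((n + 1 - Lval Q : ℕ) : ℝ≥0∞))
          + pexp (stepR p hp st.2) (fun Q => (Lval Q : ℝ≥0∞)) := add_le_add h1 h3
      _ = (((n + 1 : ℕ)) : ℝ≥0∞) := h2
  have h5 := ENNReal.le_sub_of_add_le_right (ENNReal.natCast_ne_top (Lval st.2)) h4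
  rw [ENNReal.natCast_sub]
  exact h5

end DriftChain

/-- there are constants `β, C > 0` such that for all `n ≥ 2`, all noise
rates `p ≤ β/n²`, every `K ≥ 1` and every initial population containing members of true
value `0` and `n`, the `K`-extreme-values-keeping SEMO with reevaluation satisfies
`Pr[T̂ ≥ K] ≤ C · n² / K` (here `Pr[T̂ ≥ K] = Pr[T̂ > K - 1]`). -/
theorem statement13 :
    ∃ β C : ℝ, 0 < β ∧ 0 < C ∧
      ∀ n : ℕ, 2 ≤ n → ∀ p : ℝ≥0, ∀ hp : p ≤ 1, (p : ℝ) ≤ β / n ^ 2 →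
        ∀ K : ℕ, 1 ≤ K → ∀ P₀ : StateR n,
          (∃ x ∈ P₀, fval (x : Pt n) = 0) → (∃ x ∈ P₀, fval (x : Pt n) = n) →
          notHitBy (stepK p hp K) (fun st => fCoveredR st.2) (K - 1) ((0 : ℕ), P₀) ≤
            ENNReal.ofReal (C * n ^ 2 / K) := by
  refine ⟨1 / 200, 100, by norm_num, by norm_num, ?_⟩
  intro n hn p hp hpsmall K hK P₀ hex0 hexn
  have hn0 : 0 < n := by omega
  have hexP₀ : goodExR P₀ := ⟨hex0, hexn⟩
  have hP₀ : P₀ ≠ 0 := goodExR_ne_zero hexP₀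
  -- the generic drift data
  have hbase : ∀ j (s : ℕ × StateR n),
      (s.1 + j < K ∧ goodExR s.2 ∧ Multiset.card s.2 ≤ n + 3) → ¬ fCoveredR s.2 →
      (((20 * n : ℕ) : ℝ≥0∞))⁻¹ ≤ ((n + 1 - Lval s.2 : ℕ) : ℝ≥0∞) := by
    intro j s _ hcov
    have hL := Lval_le_n_of_not_covered hcov
    calc (((20 * n : ℕ) : ℝ≥0∞))⁻¹ ≤ 1 := ENNReal.inv_le_one.mpr (by
          exact_mod_cast Nat.one_le_iff_ne_zero.mpr (by omega))
      _ ≤ ((n + 1 - Lval s.2 : ℕ) : ℝ≥0∞) := by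
          exact_mod_cast Nat.one_le_iff_ne_zero.mpr (by omega)
  have hclose : ∀ j (s : ℕ × StateR n),
      (s.1 + (j + 1) < K ∧ goodExR s.2 ∧ Multiset.card s.2 ≤ n + 3) → ¬ fCoveredR s.2 →
      ∀ s' ∈ (stepK p hp K s).support,
        s'.1 + j < K ∧ goodExR s'.2 ∧ Multiset.card s'.2 ≤ n + 3 := by
    intro j s hs _ s' hs'
    rw [stepK, PMF.support_map] at hs'
    obtain ⟨Q, hQ, rfl⟩ := hs'
    have hsK : s.1 < K := by omega
    dsimp only
    rw [if_pos hsK]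
    have hcardQ := stepR_support_card p hp s.2 (goodExR_ne_zero hs.2.1) Q hQ
    refine ⟨by omega, (fixExtremes_spec Q).1, ?_⟩
    calc Multiset.card (fixExtremes Q) ≤ Multiset.card Q + 2 := (fixExtremes_spec Q).2.1
      _ ≤ n + 3 := by omega
  have hdrift : ∀ j (s : ℕ × StateR n),
      (s.1 + j < K ∧ goodExR s.2 ∧ Multiset.card s.2 ≤ n + 3) → ¬ fCoveredR s.2 →
      pexp (stepK p hp K s) (fun st => ((n + 1 - Lval st.2 : ℕ) : ℝ≥0∞))
        + (((20 * n : ℕ) : ℝ≥0∞))⁻¹ ≤ ((n + 1 - Lval s.2 : ℕ) : ℝ≥0∞) := by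
    intro j s hs hcov
    exact stepK_drift p hp hn (by exact_mod_cast hpsmall) K s hs.2.1 hs.2.2 hcov
  have htail := drift_tail (stepK p hp K) (fun st => fCoveredR st.2)
    (fun j st => st.1 + j < K ∧ goodExR st.2 ∧ Multiset.card st.2 ≤ n + 3)
    (fun st => ((n + 1 - Lval st.2 : ℕ) : ℝ≥0∞)) (((20 * n : ℕ) : ℝ≥0∞))⁻¹
    hbase hclose hdrift
  -- the target bound rewritten
  have hKpos : (0 : ℝ) < (K : ℝ) := by exact_mod_cast hK
  have htarget : ENNReal.ofReal ((100 : ℝ) * (n : ℝ) ^ 2 / (K : ℝ))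
      = ((100 * n ^ 2 : ℕ) : ℝ≥0∞) / ((K : ℕ) : ℝ≥0∞) := by
    rw [ENNReal.ofReal_div_of_pos hKpos]
    congr 1
    · rw [show (100 : ℝ) * (n : ℝ) ^ 2 = ((100 * n ^ 2 : ℕ) : ℝ) by push_cast; ring,
        ENNReal.ofReal_natCast]
    · exact ENNReal.ofReal_natCast K
  rcases Nat.lt_or_ge K 2 with hK2 | hK2
  · -- K = 1
    have hK1 : K = 1 := by omega
    subst hK1
    calc notHitBy (stepK p hp 1) (fun st => fCoveredR st.2) 0 ((0 : ℕ), P₀)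
        ≤ 1 := notHitBy_le_one _ _ _ _
      _ ≤ ENNReal.ofReal ((100 : ℝ) * (n : ℝ) ^ 2 / ((1 : ℕ) : ℝ)) := by
          rw [ENNReal.one_le_ofReal]
          have : (2 : ℝ) ≤ (n : ℝ) := by exact_mod_cast hn
          rw [Nat.cast_one, div_one]
          nlinarith
  · -- K ≥ 2
    by_cases hg0 : fCoveredR (((0 : ℕ), P₀) : ℕ × StateR n).2
    · rw [notHitBy_of_good (stepK p hp K) (fun st => fCoveredR st.2) (K - 1)
        ((0 : ℕ), P₀) hg0]
      exact zero_le
    · have hKm : K - 1 = (K - 2) + 1 := by omega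
      rw [hKm]
      have hunfold : notHitBy (stepK p hp K) (fun st => fCoveredR st.2) ((K - 2) + 1)
          ((0 : ℕ), P₀)
          = pexp (stepK p hp K ((0 : ℕ), P₀))
              (notHitBy (stepK p hp K) (fun st => fCoveredR st.2) (K - 2)) := by
        simp only [notHitBy, hg0, if_false]
        rfl
      rw [hunfold]
      -- bound on each successor state
      have hbnd : ∀ s' ∈ (stepK p hp K ((0 : ℕ), P₀)).support,
          notHitBy (stepK p hp K) (fun st => fCoveredR st.2) (K - 2) s'
            ≤ ((20 * n * (n + 1) : ℕ) : ℝ≥0∞) / (((K - 1 : ℕ)) : ℝ≥0∞) := by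
        intro s' hs'
        have hInv : s'.1 + (K - 2) < K ∧ goodExR s'.2 ∧ Multiset.card s'.2 ≤ n + 3 := by
          rw [stepK, PMF.support_map] at hs'
          obtain ⟨Q, hQ, rfl⟩ := hs'
          dsimp only
          rw [if_pos (by omega : (0 : ℕ) < K)]
          have hcardQ := stepR_support_card p hp P₀ hP₀ Q hQ
          refine ⟨by simp; omega, (fixExtremes_spec Q).1, ?_⟩
          calc Multiset.card (fixExtremes Q) ≤ Multiset.card Q + 2 := (fixExtremes_spec Q).2.1
            _ ≤ n + 3 := by omega
        have h6 := htail (K - 2) s' hInv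
        -- δ * ((t+1) * N) ≤ φ ≤ n+1
        have h7 : (((20 * n : ℕ) : ℝ≥0∞))⁻¹ * ((((K - 2 : ℕ) : ℝ≥0∞) + 1)
            * notHitBy (stepK p hp K) (fun st => fCoveredR st.2) (K - 2) s')
            ≤ (((n + 1 : ℕ)) : ℝ≥0∞) := by
          refine le_trans h6 ?_
          exact_mod_cast Nat.cast_le.mpr (Nat.sub_le _ _)
        have hD0 : ((20 * n : ℕ) : ℝ≥0∞) ≠ 0 := by
          exact_mod_cast (by omega : 20 * n ≠ 0)
        have hDt : ((20 * n : ℕ) : ℝ≥0∞) ≠ ⊤ := ENNReal.natCast_ne_top _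
        have h8 : (((K - 2 : ℕ) : ℝ≥0∞) + 1)
            * notHitBy (stepK p hp K) (fun st => fCoveredR st.2) (K - 2) s'
            ≤ ((20 * n : ℕ) : ℝ≥0∞) * (((n + 1 : ℕ)) : ℝ≥0∞) := by
          calc (((K - 2 : ℕ) : ℝ≥0∞) + 1)
              * notHitBy (stepK p hp K) (fun st => fCoveredR st.2) (K - 2) s'
              = ((20 * n : ℕ) : ℝ≥0∞) * ((((20 * n : ℕ) : ℝ≥0∞))⁻¹
                * ((((K - 2 : ℕ) : ℝ≥0∞) + 1)
                  * notHitBy (stepK p hp K) (fun st => fCoveredR st.2) (K - 2) s')) := by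
                rw [← mul_assoc, ENNReal.mul_inv_cancel hD0 hDt, one_mul]
            _ ≤ ((20 * n : ℕ) : ℝ≥0∞) * (((n + 1 : ℕ)) : ℝ≥0∞) := mul_le_mul_right h7 _
        have hT1 : (((K - 2 : ℕ) : ℝ≥0∞) + 1) = (((K - 1 : ℕ)) : ℝ≥0∞) := by
          have : (K - 2) + 1 = K - 1 := by omega
          exact_mod_cast congrArg (Nat.cast : ℕ → ℝ≥0∞) this
        have hT0 : (((K - 1 : ℕ)) : ℝ≥0∞) ≠ 0 := by
          exact_mod_cast (by omega : K - 1 ≠ 0)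
        have hTt : (((K - 1 : ℕ)) : ℝ≥0∞) ≠ ⊤ := ENNReal.natCast_ne_top _
        rw [hT1] at h8
        rw [ENNReal.le_div_iff_mul_le (Or.inl hT0) (Or.inl hTt)]
        calc notHitBy (stepK p hp K) (fun st => fCoveredR st.2) (K - 2) s'
              * (((K - 1 : ℕ)) : ℝ≥0∞)
            = (((K - 1 : ℕ)) : ℝ≥0∞)
              * notHitBy (stepK p hp K) (fun st => fCoveredR st.2) (K - 2) s' := mul_comm _ _
          _ ≤ ((20 * n : ℕ) : ℝ≥0∞) * (((n + 1 : ℕ)) : ℝ≥0∞) := h8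
          _ = ((20 * n * (n + 1) : ℕ) : ℝ≥0∞) := by push_cast; ring
      calc pexp (stepK p hp K ((0 : ℕ), P₀))
            (notHitBy (stepK p hp K) (fun st => fCoveredR st.2) (K - 2))
          ≤ ((20 * n * (n + 1) : ℕ) : ℝ≥0∞) / (((K - 1 : ℕ)) : ℝ≥0∞) :=
            pexp_le_const hbnd
        _ ≤ ENNReal.ofReal ((100 : ℝ) * (n : ℝ) ^ 2 / (K : ℝ)) := by
            rw [htarget]
            have hK0 : ((K : ℕ) : ℝ≥0∞) ≠ 0 := by exact_mod_cast (by omega : K ≠ 0)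
            have hKt : ((K : ℕ) : ℝ≥0∞) ≠ ⊤ := ENNReal.natCast_ne_top _
            have hK10 : (((K - 1 : ℕ)) : ℝ≥0∞) ≠ 0 := by
              exact_mod_cast (by omega : K - 1 ≠ 0)
            have hK1t : (((K - 1 : ℕ)) : ℝ≥0∞) ≠ ⊤ := ENNReal.natCast_ne_top _
            rw [ENNReal.le_div_iff_mul_le (Or.inl hK0) (Or.inl hKt),
              div_eq_mul_inv, mul_right_comm, ← div_eq_mul_inv,
              ENNReal.div_le_iff_le_mul (Or.inl hK10) (Or.inl hK1t)]
            have hnat : 20 * n * (n + 1) * K ≤ 100 * n ^ 2 * (K - 1) := by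
              obtain ⟨M, rfl⟩ : ∃ M, K = M + 1 := ⟨K - 1, by omega⟩
              have hM : 1 ≤ M := by omega
              simp only [Nat.add_sub_cancel]
              calc 20 * n * (n + 1) * (M + 1)
                  ≤ 20 * n * (2 * n) * (M + 1) :=
                    Nat.mul_le_mul (Nat.mul_le_mul le_rfl (by omega)) le_rfl
                _ = 40 * n ^ 2 * (M + 1) := by ring
                _ ≤ 40 * n ^ 2 * (2 * M) := Nat.mul_le_mul le_rfl (by omega)
                _ = 80 * n ^ 2 * M := by ring
                _ ≤ 100 * n ^ 2 * M := Nat.mul_le_mul (by nlinarith) le_rfl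
            calc ((20 * n * (n + 1) : ℕ) : ℝ≥0∞) * ((K : ℕ) : ℝ≥0∞)
                = ((20 * n * (n + 1) * K : ℕ) : ℝ≥0∞) := by push_cast; ring
              _ ≤ ((100 * n ^ 2 * (K - 1) : ℕ) : ℝ≥0∞) := by exact_mod_cast hnat
              _ = ((100 * n ^ 2 : ℕ) : ℝ≥0∞) * (((K - 1 : ℕ)) : ℝ≥0∞) := by push_cast; ring

end
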